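/- Let H be a finite-dimensional complex vector space with a real structure σ, and let (W_•, F^•) be a mixed Hodge structure on (H, σ). For p, q ∈ ℤ define the Deligne subspace I^{p,q} := F^p ∩ W_{p+q} ∩ ( σ(F^q) ∩ W_{p+q} + Σ_{j≥2} σ(F^{q−j+1}) ∩ W_{p+q−j} ). Then for every k ∈ ℤ one has W_k = ⊕_{p+q ≤ k} I^{p,q}, and for every p ∈ ℤ one has F^p = ⊕_{r ≥ p, q ∈ ℤ} I^{r,q} (internal direct sums in H). -/

import Mathlib

/- A real structure on a ℂ-vector space `H` is a conjugate-linear involution `σ`, modeled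
as a `starRingEnd ℂ`-semilinear endomorphism with `σ ∘ σ = id`. For a subspace `S`,
`σ(S)` is `S.map σ`. -/

instance : RingHomSurjective (starRingEnd ℂ) := ⟨fun x => ⟨star x, by simp⟩⟩

/-- A mixed Hodge structure on `(H, σ)`: an increasing filtration `W` by `σ`-stable
subspaces, exhaustive and separated, and a decreasing filtration `F`, exhaustive and
separated, such that for every `j` the filtration induced by `F` on `Gr^W_j = W_j/W_{j-1}`
is `j`-opposed for the conjugation induced by `σ`.  The last two fields express, purely in
terms of subspaces of `H`, that the images of `F^p ∩ W_j` and `σ(F^{j-p+1}) ∩ W_j` in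
`W_j/W_{j-1}` span the quotient and intersect trivially, i.e. `j`-opposedness of the
induced filtration on `Gr^W_j`. -/
structure IsMixedHodgeStructure {H : Type*} [AddCommGroup H] [Module ℂ H]
    (σ : H →ₛₗ[starRingEnd ℂ] H)
    (W : ℤ → Submodule ℂ H) (F : ℤ → Submodule ℂ H) : Prop where
  w_mono : Monotone W
  w_stable : ∀ j : ℤ, (W j).map σ = W j
  w_bot : ∃ a : ℤ, ∀ j : ℤ, j ≤ a → W j = ⊥
  w_top : ∃ b : ℤ, ∀ j : ℤ, b ≤ j → W j = ⊤
  f_anti : ∀ p q : ℤ, p ≤ q → F q ≤ F p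
  f_top : ∃ a : ℤ, ∀ p : ℤ, p ≤ a → F p = ⊤
  f_bot : ∃ b : ℤ, ∀ p : ℤ, b ≤ p → F p = ⊥
  gr_opposed_sup : ∀ j p : ℤ,
    (F p ⊓ W j) ⊔ ((F (j - p + 1)).map σ ⊓ W j) ⊔ W (j - 1) = W j
  gr_opposed_inf : ∀ j p : ℤ,
    ((F p ⊓ W j) ⊔ W (j - 1)) ⊓ (((F (j - p + 1)).map σ ⊓ W j) ⊔ W (j - 1)) ≤ W (j - 1)

/-- The Deligne subspace
`I^{p,q} = F^p ∩ W_{p+q} ∩ (σ(F^q) ∩ W_{p+q} + Σ_{j ≥ 2} σ(F^{q-j+1}) ∩ W_{p+q-j})`. -/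
def deligneI {H : Type*} [AddCommGroup H] [Module ℂ H]
    (σ : H →ₛₗ[starRingEnd ℂ] H) (W F : ℤ → Submodule ℂ H) (p q : ℤ) : Submodule ℂ H :=
  F p ⊓ W (p + q) ⊓
    ((F q).map σ ⊓ W (p + q) ⊔
      ⨆ j : ℤ, ⨆ _ : 2 ≤ j, (F (q - j + 1)).map σ ⊓ W (p + q - j))

namespace DeligneAux
set_option linter.unusedSectionVars false

variable {H : Type*} [AddCommGroup H] [Module ℂ H]
variable (σ : H →ₛₗ[starRingEnd ℂ] H) (W F : ℤ → Submodule ℂ H)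

/-- the second factor of `deligneI` -/
def sf (p q : ℤ) : Submodule ℂ H :=
  (F q).map σ ⊓ W (p + q) ⊔
    ⨆ j : ℤ, ⨆ _ : 2 ≤ j, (F (q - j + 1)).map σ ⊓ W (p + q - j)

lemma deligneI_eq (p q : ℤ) : deligneI σ W F p q = F p ⊓ W (p + q) ⊓ sf σ W F p q := rfl

section sigma
variable {σ}
variable (hσ : ∀ v, σ (σ v) = v)

lemma mem_map_sigma (hσ : ∀ v, σ (σ v) = v) {S : Submodule ℂ H} {x : H} :
    x ∈ S.map σ ↔ σ x ∈ S := by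
  constructor
  · rintro ⟨y, hy, rfl⟩; rwa [hσ]
  · intro h; exact ⟨σ x, h, hσ x⟩

lemma map_map_sigma (hσ : ∀ v, σ (σ v) = v) (S : Submodule ℂ H) :
    (S.map σ).map σ = S := by
  ext x
  rw [mem_map_sigma hσ, mem_map_sigma hσ, hσ]

lemma map_inf_sigma (hσ : ∀ v, σ (σ v) = v) (S T : Submodule ℂ H) :
    (S ⊓ T).map σ = S.map σ ⊓ T.map σ := by
  ext x
  simp only [Submodule.mem_inf, mem_map_sigma hσ]

lemma map_sigma_mono {S T : Submodule ℂ H} (h : S ≤ T) : S.map σ ≤ T.map σ :=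
  Submodule.map_mono h

end sigma


section MHS
variable {σ W F}
variable (hM : IsMixedHodgeStructure σ W F)
include hM

lemma term_le_sf {p q t m : ℤ}
    (h : (q ≤ t ∧ m ≤ p + q) ∨ (2 ≤ p + q - m ∧ q - (p + q - m) + 1 ≤ t)) :
    (F t).map σ ⊓ W m ≤ sf σ W F p q := by
  rcases h with ⟨h1, h2⟩ | ⟨h1, h2⟩
  · exact le_sup_of_le_left (inf_le_inf (Submodule.map_mono (hM.f_anti _ _ h1)) (hM.w_mono h2))
  · refine le_sup_of_le_right ?_
    refine le_trans ?_ (le_iSup₂ (p + q - m) h1)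
    refine inf_le_inf (Submodule.map_mono (hM.f_anti _ _ h2)) (le_of_eq ?_)
    congr 1; ring

lemma sf_mono {p q r s : ℤ} (hr : r ≤ p - 1) (hw : r + s ≤ p + q - 1) :
    sf σ W F r s ≤ sf σ W F p q := by
  refine sup_le ?_ (iSup₂_le fun j hj => ?_)
  · rcases lt_or_ge (r + s) (p + q - 1) with hlt | hge
    · exact term_le_sf hM (Or.inr ⟨by omega, by omega⟩)
    · exact term_le_sf hM (Or.inl ⟨by omega, by omega⟩)
  · exact term_le_sf hM (Or.inr ⟨by omega, by omega⟩)

lemma J_le_W {p q m : ℤ} (hm : p + q - 2 ≤ m) :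
    (⨆ j : ℤ, ⨆ _ : 2 ≤ j, (F (q - j + 1)).map σ ⊓ W (p + q - j)) ≤ W m :=
  iSup₂_le fun j hj => inf_le_right.trans (hM.w_mono (by omega))

lemma I_le_F (p q : ℤ) : deligneI σ W F p q ≤ F p := inf_le_left.trans inf_le_left

lemma I_le_W (p q : ℤ) : deligneI σ W F p q ≤ W (p + q) := inf_le_left.trans inf_le_right

lemma I_le_sf (p q : ℤ) : deligneI σ W F p q ≤ sf σ W F p q := inf_le_right

end MHS

/-! ### The pure (graded) level lattice facts -/

def pf (n p : ℤ) : Submodule ℂ H := F p ⊓ W n ⊔ W (n - 1)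

def pg (n q : ℤ) : Submodule ℂ H := (F q).map σ ⊓ W n ⊔ W (n - 1)

def ph (n p : ℤ) : Submodule ℂ H := pf W F n p ⊓ pg σ W F n (n - p)

section Pure
variable {σ W F}

lemma W_le_pf (n p : ℤ) : W (n - 1) ≤ pf W F n p := le_sup_right

lemma W_le_pg (n q : ℤ) : W (n - 1) ≤ pg σ W F n q := le_sup_right

lemma W_le_ph (n p : ℤ) : W (n - 1) ≤ ph σ W F n p :=
  le_inf le_sup_right le_sup_right

variable (hM : IsMixedHodgeStructure σ W F)
include hM

lemma pf_le_W (n p : ℤ) : pf W F n p ≤ W n :=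
  sup_le inf_le_right (hM.w_mono (by omega))

lemma pg_le_W (n q : ℤ) : pg σ W F n q ≤ W n :=
  sup_le inf_le_right (hM.w_mono (by omega))

lemma ph_le_W (n p : ℤ) : ph σ W F n p ≤ W n :=
  inf_le_left.trans (pf_le_W hM n p)

lemma pf_anti (n : ℤ) {p p' : ℤ} (h : p ≤ p') : pf W F n p' ≤ pf W F n p :=
  sup_le (le_sup_of_le_left (inf_le_inf_right _ (hM.f_anti _ _ h))) le_sup_right

lemma pg_anti (n : ℤ) {q q' : ℤ} (h : q ≤ q') : pg σ W F n q' ≤ pg σ W F n q :=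
  sup_le (le_sup_of_le_left (inf_le_inf_right _ (Submodule.map_mono (hM.f_anti _ _ h))))
    le_sup_right

lemma pure_sup (n p : ℤ) : pf W F n p ⊔ pg σ W F n (n - p + 1) = W n := by
  rw [pf, pg, sup_sup_sup_comm, sup_idem]
  exact hM.gr_opposed_sup n p

lemma pure_inf (n p : ℤ) : pf W F n p ⊓ pg σ W F n (n - p + 1) = W (n - 1) :=
  le_antisymm (hM.gr_opposed_inf n p)
    (le_inf le_sup_right le_sup_right)


lemma pure_stepA (n p : ℤ) : pf W F n p = ph σ W F n p ⊔ pf W F n (p + 1) := by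
  have h1 : pf W F n (p + 1) ⊔ pg σ W F n (n - p) = W n := by
    have := pure_sup hM n (p + 1)
    rwa [show n - (p + 1) + 1 = n - p by ring] at this
  have h2 : pf W F n p = (pf W F n (p + 1) ⊔ pg σ W F n (n - p)) ⊓ pf W F n p := by
    rw [h1, inf_eq_right.mpr (pf_le_W hM n p)]
  rw [h2, sup_inf_assoc_of_le _ (pf_anti hM n (by omega : p ≤ p + 1)), sup_comm, ph,
    inf_comm (pf W F n p)]

lemma pure_stepB (n q : ℤ) : pg σ W F n q = ph σ W F n (n - q) ⊔ pg σ W F n (q + 1) := by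
  have h1 : pg σ W F n (q + 1) ⊔ pf W F n (n - q) = W n := by
    have := pure_sup hM n (n - q)
    rw [show n - (n - q) + 1 = q + 1 by ring] at this
    rw [sup_comm] at this; exact this
  have h2 : pg σ W F n q = (pg σ W F n (q + 1) ⊔ pf W F n (n - q)) ⊓ pg σ W F n q := by
    rw [h1, inf_eq_right.mpr (pg_le_W hM n q)]
  rw [h2, sup_inf_assoc_of_le _ (pg_anti hM n (by omega : q ≤ q + 1)), sup_comm, ph,
    show n - (n - q) = q by ring]

lemma pure_sumF (n p : ℤ) : pf W F n p = ⨆ r, ⨆ _ : p ≤ r, ph σ W F n r := by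
  refine le_antisymm ?_ (iSup₂_le fun r hr => inf_le_left.trans (pf_anti hM n hr))
  obtain ⟨bF, hbF⟩ := hM.f_bot
  have base : ∀ p' : ℤ, bF ≤ p' → pf W F n p' ≤ ⨆ r, ⨆ _ : p' ≤ r, ph σ W F n r := by
    intro p' hp'
    have he : pf W F n p' = W (n - 1) := by
      rw [pf, hbF p' hp', bot_inf_eq, bot_sup_eq]
    rw [he]
    exact (W_le_ph (σ := σ) n p').trans (le_iSup₂ (f := fun r (_ : p' ≤ r) => ph σ W F n r) p' le_rfl)
  have key : ∀ k : ℕ, ∀ p' : ℤ, bF - p' ≤ (k : ℤ) →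
      pf W F n p' ≤ ⨆ r, ⨆ _ : p' ≤ r, ph σ W F n r := by
    intro k
    induction k with
    | zero => intro p' hp'; exact base p' (by omega)
    | succ m ih =>
      intro p' hp'
      rcases le_or_gt bF p' with h | h
      · exact base p' h
      · rw [pure_stepA hM n p']
        refine sup_le (le_iSup₂ (f := fun r (_ : p' ≤ r) => ph σ W F n r) p' le_rfl) ?_
        refine le_trans (ih (p' + 1) (by omega)) ?_
        exact iSup₂_le fun r hr =>
          le_iSup₂ (f := fun r (_ : p' ≤ r) => ph σ W F n r) r (by omega)
  exact key (bF - p).toNat p (by omega)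

lemma pure_sumG (n q : ℤ) : pg σ W F n q = ⨆ s, ⨆ _ : q ≤ s, ph σ W F n (n - s) := by
  refine le_antisymm ?_ (iSup₂_le fun s hs =>
    inf_le_right.trans (by
      refine le_trans (pg_anti hM n (by omega : q ≤ n - (n - s))) le_rfl))
  obtain ⟨bF, hbF⟩ := hM.f_bot
  have base : ∀ q' : ℤ, bF ≤ q' → pg σ W F n q' ≤ ⨆ s, ⨆ _ : q' ≤ s, ph σ W F n (n - s) := by
    intro q' hq'
    have he : pg σ W F n q' = W (n - 1) := by
      rw [pg, hbF q' hq', Submodule.map_bot, bot_inf_eq, bot_sup_eq]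
    rw [he]
    exact (W_le_ph (σ := σ) n (n - q')).trans (le_iSup₂ (f := fun s (_ : q' ≤ s) => ph σ W F n (n - s)) q' le_rfl)
  have key : ∀ k : ℕ, ∀ q' : ℤ, bF - q' ≤ (k : ℤ) →
      pg σ W F n q' ≤ ⨆ s, ⨆ _ : q' ≤ s, ph σ W F n (n - s) := by
    intro k
    induction k with
    | zero => intro q' hq'; exact base q' (by omega)
    | succ m ih =>
      intro q' hq'
      rcases le_or_gt bF q' with h | h
      · exact base q' h
      · rw [pure_stepB hM n q']
        refine sup_le (le_iSup₂ (f := fun s (_ : q' ≤ s) => ph σ W F n (n - s)) q' le_rfl) ?_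
        refine le_trans (ih (q' + 1) (by omega)) ?_
        exact iSup₂_le fun s hs =>
          le_iSup₂ (f := fun s (_ : q' ≤ s) => ph σ W F n (n - s)) s (by omega)
  exact key (bF - q).toNat q (by omega)

lemma pure_sumW (n : ℤ) : W n = ⨆ r, ph σ W F n r := by
  obtain ⟨aF, haF⟩ := hM.f_top
  have he : pf W F n aF = W n := by
    rw [pf, haF aF le_rfl, top_inf_eq, sup_eq_left.mpr (hM.w_mono (by omega))]
  refine le_antisymm ?_ (iSup_le fun r => ph_le_W hM n r)
  rw [← he, pure_sumF hM n aF]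
  exact iSup₂_le fun r hr => le_iSup _ r

lemma pure_disj (n p : ℤ) :
    ph σ W F n p ⊓ (⨆ r, ⨆ _ : r ≠ p, ph σ W F n r) ≤ W (n - 1) := by
  have hsup : (⨆ r, ⨆ _ : r ≠ p, ph σ W F n r) ≤
      pf W F n (p + 1) ⊔ pg σ W F n (n - p + 1) := by
    refine iSup₂_le fun r hr => ?_
    rcases lt_or_gt_of_ne hr with h | h
    · exact le_sup_of_le_right (inf_le_right.trans (pg_anti hM n (by omega)))
    · exact le_sup_of_le_left (inf_le_left.trans (pf_anti hM n (by omega)))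
  refine le_trans (inf_le_inf_left _ hsup) ?_
  rw [ph, inf_assoc]
  have inner : pg σ W F n (n - p) ⊓ (pf W F n (p + 1) ⊔ pg σ W F n (n - p + 1)) ≤
      pg σ W F n (n - p + 1) := by
    rw [sup_comm, inf_comm,
      sup_inf_assoc_of_le _ (pg_anti hM n (by omega : n - p ≤ n - p + 1))]
    have h2 : pf W F n (p + 1) ⊓ pg σ W F n (n - p) ≤ W (n - 1) := by
      have := (pure_inf hM n (p + 1)).le
      rwa [show n - (p + 1) + 1 = n - p by ring] at this
    exact sup_le le_rfl (h2.trans le_sup_right)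
  refine le_trans (inf_le_inf_left _ inner) ?_
  exact (pure_inf hM n p).le

lemma I_le_pf (p q : ℤ) : deligneI σ W F p q ≤ pf W F (p + q) p :=
  inf_le_left.trans le_sup_left

lemma I_le_pg (p q : ℤ) : deligneI σ W F p q ≤ pg σ W F (p + q) q :=
  inf_le_right.trans (sup_le le_sup_left ((J_le_W hM (by omega)).trans le_sup_right))

lemma I_le_ph (p q : ℤ) : deligneI σ W F p q ≤ ph σ W F (p + q) p := by
  refine le_inf (I_le_pf hM p q) ?_
  rw [show p + q - p = q by ring]
  exact I_le_pg hM p q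

end Pure

/-! ### Finite representations of members of suprema -/

lemma rep_of_mem_iSup {ι : Type*} (v : ι → Submodule ℂ H) {x : H} (hx : x ∈ ⨆ i, v i) :
    ∃ (s : Finset ι) (c : ι → H), (∀ i, c i ∈ v i) ∧ (∀ i, i ∉ s → c i = 0) ∧
      ∑ i ∈ s, c i = x := by
  classical
  refine Submodule.iSup_induction (motive := fun x => ∃ (s : Finset ι) (c : ι → H),
    (∀ i, c i ∈ v i) ∧ (∀ i, i ∉ s → c i = 0) ∧ ∑ i ∈ s, c i = x) v hx ?_ ?_ ?_
  · intro i x hxi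
    refine ⟨{i}, fun j => if j = i then x else 0, fun j => ?_, fun j hj => ?_, by simp⟩
    · by_cases h : j = i
      · subst h; simpa using hxi
      · simp [h]
    · simp only [Finset.mem_singleton] at hj; simp [hj]
  · exact ⟨∅, fun _ => 0, fun i => zero_mem _, fun _ _ => rfl, by simp⟩
  · rintro x y ⟨s1, c1, h1, h1s, rfl⟩ ⟨s2, c2, h2, h2s, rfl⟩
    refine ⟨s1 ∪ s2, c1 + c2, fun i => add_mem (h1 i) (h2 i), fun i hi => ?_, ?_⟩
    · have e1 := h1s i (fun h => hi (Finset.mem_union_left _ h))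
      have e2 := h2s i (fun h => hi (Finset.mem_union_right _ h))
      simp [Pi.add_apply, e1, e2]
    · simp only [Pi.add_apply]
      rw [Finset.sum_add_distrib]
      congr 1
      · exact (Finset.sum_subset Finset.subset_union_left fun i _ hi => h1s i hi).symm
      · exact (Finset.sum_subset Finset.subset_union_right fun i _ hi => h2s i hi).symm

lemma rep_of_mem_biSup {ι : Type*} (v : ι → Submodule ℂ H) (S : Set ι) {x : H}
    (hx : x ∈ ⨆ i, ⨆ _ : i ∈ S, v i) :
    ∃ (s : Finset ι) (c : ι → H), (∀ i, c i ∈ v i) ∧ (∀ i, i ∉ s → c i = 0) ∧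
      (∀ i, c i ≠ 0 → i ∈ S) ∧ ∑ i ∈ s, c i = x := by
  classical
  obtain ⟨s, c, hc, hcs, hsum⟩ := rep_of_mem_iSup (fun i => ⨆ _ : i ∈ S, v i) hx
  have hSmem : ∀ i, i ∈ S ∨ c i = 0 := by
    intro i
    by_cases h : i ∈ S
    · exact Or.inl h
    · right
      have := hc i
      rw [iSup_neg h] at this
      simpa using this
  refine ⟨s, c, fun i => ?_, hcs, fun i hi => ?_, hsum⟩
  · rcases hSmem i with h | h
    · have := hc i; rwa [iSup_pos h] at this
    · rw [h]; exact zero_mem _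
  · rcases hSmem i with h | h
    · exact h
    · exact absurd h hi

lemma mem_biSup_of {ι : Type*} {v : ι → Submodule ℂ H} {P : ι → Prop} {x : H} (i : ι)
    (hP : P i) (hx : x ∈ v i) : x ∈ ⨆ j, ⨆ _ : P j, v j :=
  Submodule.mem_iSup_of_mem i (by rw [iSup_pos hP]; exact hx)

lemma le_biSup {ι : Type*} (v : ι → Submodule ℂ H) {P : ι → Prop} {i : ι} (hP : P i) :
    v i ≤ ⨆ j, ⨆ _ : P j, v j := fun _ hx => mem_biSup_of i hP hx

/-! ### The inductive statements -/

def S1 (n : ℤ) : Prop :=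
  W n = ⨆ i : ℤ × ℤ, ⨆ _ : i.1 + i.2 ≤ n, deligneI σ W F i.1 i.2

def S2 (n : ℤ) : Prop :=
  ∀ p : ℤ, F p ⊓ W n =
    ⨆ i : ℤ × ℤ, ⨆ _ : p ≤ i.1 ∧ i.1 + i.2 ≤ n, deligneI σ W F i.1 i.2

def Rel (n : ℤ) : Prop :=
  ∀ (s : Finset (ℤ × ℤ)) (c : ℤ × ℤ → H),
    (∀ i, c i ∈ deligneI σ W F i.1 i.2) →
    (∀ i, i ∉ s → c i = 0) →
    (∀ i, c i ≠ 0 → i.1 + i.2 ≤ n) →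
    ∑ i ∈ s, c i = 0 → ∀ i, c i = 0

def S4 (n : ℤ) : Prop :=
  ∀ p q : ℤ, p + q ≤ n →
    (deligneI σ W F p q).map σ ≤
      deligneI σ W F q p ⊔
        ⨆ i : ℤ × ℤ, ⨆ _ : i.1 ≤ q - 1 ∧ i.2 ≤ p - 1, deligneI σ W F i.1 i.2

variable {σ W F}

lemma S4.mono {n m : ℤ} (h : S4 σ W F n) (hm : m ≤ n) : S4 σ W F m :=
  fun p q hpq => h p q (by omega)

lemma rel_inf {n : ℤ} (hrel : Rel σ W F n) (A B : Set (ℤ × ℤ))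
    (hA : ∀ i ∈ A, i.1 + i.2 ≤ n) (hB : ∀ i ∈ B, i.1 + i.2 ≤ n) :
    (⨆ i : ℤ × ℤ, ⨆ _ : i ∈ A, deligneI σ W F i.1 i.2) ⊓
      (⨆ i : ℤ × ℤ, ⨆ _ : i ∈ B, deligneI σ W F i.1 i.2) ≤
      ⨆ i : ℤ × ℤ, ⨆ _ : i ∈ A ∩ B, deligneI σ W F i.1 i.2 := by
  classical
  intro x hx
  obtain ⟨hxA, hxB⟩ := Submodule.mem_inf.mp hx
  obtain ⟨s1, c1, hc1, hc1s, hc1S, hsum1⟩ :=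
    rep_of_mem_biSup (fun i : ℤ × ℤ => deligneI σ W F i.1 i.2) A hxA
  obtain ⟨s2, c2, hc2, hc2s, hc2S, hsum2⟩ :=
    rep_of_mem_biSup (fun i : ℤ × ℤ => deligneI σ W F i.1 i.2) B hxB
  have key : ∀ i, c1 i - c2 i = 0 := by
    refine hrel (s1 ∪ s2) (c1 - c2) (fun i => sub_mem (hc1 i) (hc2 i)) ?_ ?_ ?_
    · intro i hi
      have e1 := hc1s i (fun h => hi (Finset.mem_union_left _ h))
      have e2 := hc2s i (fun h => hi (Finset.mem_union_right _ h))
      simp [Pi.sub_apply, e1, e2]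
    · intro i hi
      simp only [Pi.sub_apply] at hi
      by_cases h1 : c1 i = 0
      · have h2 : c2 i ≠ 0 := by intro h2; exact hi (by rw [h1, h2, sub_zero])
        exact hB i (hc2S i h2)
      · exact hA i (hc1S i h1)
    · have e1 : ∑ i ∈ s1 ∪ s2, c1 i = x :=
        (Finset.sum_subset Finset.subset_union_left fun i _ hi => hc1s i hi).symm ▸ hsum1
      have e2 : ∑ i ∈ s1 ∪ s2, c2 i = x :=
        (Finset.sum_subset Finset.subset_union_right fun i _ hi => hc2s i hi).symm ▸ hsum2
      simp only [Pi.sub_apply, Finset.sum_sub_distrib, e1, e2, sub_self]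
  rw [← hsum1]
  refine Submodule.sum_mem _ fun i _ => ?_
  by_cases h0 : c1 i = 0
  · rw [h0]; exact zero_mem _
  · have hiA := hc1S i h0
    have hiB : i ∈ B := by
      refine hc2S i ?_
      have := key i
      rw [sub_eq_zero] at this
      rw [← this]; exact h0
    exact (le_iSup₂ (f := fun i (_ : i ∈ A ∩ B) => deligneI σ W F i.1 i.2) i ⟨hiA, hiB⟩)
      (hc1 i)

lemma sigmaFW_le (hσ : ∀ v, σ (σ v) = v) (hM : IsMixedHodgeStructure σ W F)
    {m : ℤ} (hS2 : S2 σ W F m) (hS4 : S4 σ W F m) (t : ℤ) :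
    (F t).map σ ⊓ W m ≤
      ⨆ i : ℤ × ℤ, ⨆ _ : i.1 + i.2 ≤ m ∧ i.1 ≤ m - t, deligneI σ W F i.1 i.2 := by
  have h1 : (F t).map σ ⊓ W m = (F t ⊓ W m).map σ := by
    rw [map_inf_sigma hσ, hM.w_stable m]
  rw [h1, hS2 t, Submodule.map_iSup]
  refine iSup_le fun i => ?_
  rw [Submodule.map_iSup]
  refine iSup_le fun hi => ?_
  refine le_trans (hS4 i.1 i.2 hi.2) (sup_le ?_ ?_)
  · exact le_iSup₂ (f := fun i (_ : i.1 + i.2 ≤ m ∧ i.1 ≤ m - t) => deligneI σ W F i.1 i.2)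
      (i.2, i.1) ⟨by omega, by omega⟩
  · exact iSup₂_le fun j hj =>
      le_iSup₂ (f := fun i (_ : i.1 + i.2 ≤ m ∧ i.1 ≤ m - t) => deligneI σ W F i.1 i.2)
        j ⟨by omega, by omega⟩

lemma lift_step (hM : IsMixedHodgeStructure σ W F) {n : ℤ}
    (hS1 : S1 σ W F (n - 1)) (p : ℤ) :
    ph σ W F n p ≤ deligneI σ W F p (n - p) ⊔ W (n - 1) := by
  classical
  intro c hc
  obtain ⟨hcf, hcg⟩ := Submodule.mem_inf.mp hc
  obtain ⟨v, hv, w1, hw1, hvw1⟩ := Submodule.mem_sup.mp hcf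
  obtain ⟨u, hu, w2, hw2, hvw2⟩ := Submodule.mem_sup.mp hcg
  have hvu : v - u ∈ W (n - 1) := by
    have he : v - u = w2 - w1 := by
      have e1 : v = c - w1 := by rw [← hvw1]; abel
      have e2 : u = c - w2 := by rw [← hvw2]; abel
      rw [e1, e2]; abel
    rw [he]; exact sub_mem hw2 hw1
  rw [hS1] at hvu
  obtain ⟨s, a, ha, has, haS, hsum⟩ :=
    rep_of_mem_biSup (fun i : ℤ × ℤ => deligneI σ W F i.1 i.2)
      {i : ℤ × ℤ | i.1 + i.2 ≤ n - 1} hvu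
  set P : Finset (ℤ × ℤ) := s.filter (fun i => p ≤ i.1) with hP
  refine Submodule.mem_sup.mpr
    ⟨v - ∑ i ∈ P, a i, ?_, (∑ i ∈ P, a i) + w1, ?_, by rw [← hvw1]; abel⟩
  · rw [deligneI_eq]
    refine Submodule.mem_inf.mpr ⟨Submodule.mem_inf.mpr ⟨?_, ?_⟩, ?_⟩
    · refine sub_mem (Submodule.mem_inf.mp hv).1 (Submodule.sum_mem _ fun i hi => ?_)
      exact hM.f_anti p i.1 (Finset.mem_filter.mp hi).2 ((I_le_F hM i.1 i.2) (ha i))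
    · rw [show p + (n - p) = n by ring]
      refine sub_mem (Submodule.mem_inf.mp hv).2 (Submodule.sum_mem _ fun i hi => ?_)
      by_cases h0 : a i = 0
      · rw [h0]; exact zero_mem _
      · have hw : i.1 + i.2 ≤ n - 1 := haS i h0
        exact hM.w_mono (by omega : i.1 + i.2 ≤ n) ((I_le_W hM i.1 i.2) (ha i))
    · set Q : Finset (ℤ × ℤ) := s.filter (fun i => ¬ p ≤ i.1) with hQ
      have hPQ : (∑ i ∈ P, a i) + ∑ i ∈ Q, a i = v - u := by
        rw [hP, hQ, Finset.sum_filter_add_sum_filter_not]; exact hsum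
      have he2 : v - ∑ i ∈ P, a i = u + ∑ i ∈ Q, a i := by
        have hv3 : v = u + ((∑ i ∈ P, a i) + ∑ i ∈ Q, a i) := by rw [hPQ]; abel
        rw [hv3]; abel
      rw [he2]
      refine add_mem ((term_le_sf hM (Or.inl ⟨le_rfl, by omega⟩)) hu)
        (Submodule.sum_mem _ fun i hi => ?_)
      by_cases h0 : a i = 0
      · rw [h0]; exact zero_mem _
      · have hwt : i.1 + i.2 ≤ n - 1 := haS i h0
        have hip : ¬ p ≤ i.1 := (Finset.mem_filter.mp hi).2
        exact (sf_mono hM (by omega) (by omega)) ((I_le_sf hM i.1 i.2) (ha i))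
  · refine add_mem (Submodule.sum_mem _ fun i hi => ?_) hw1
    by_cases h0 : a i = 0
    · rw [h0]; exact zero_mem _
    · have hw : i.1 + i.2 ≤ n - 1 := haS i h0
      exact hM.w_mono (by omega : i.1 + i.2 ≤ n - 1) ((I_le_W hM i.1 i.2) (ha i))

lemma S1_step (hM : IsMixedHodgeStructure σ W F) {n : ℤ}
    (hS1 : S1 σ W F (n - 1)) : S1 σ W F n := by
  unfold S1
  refine le_antisymm ?_ (iSup₂_le fun i hi => (I_le_W hM i.1 i.2).trans (hM.w_mono hi))
  rw [pure_sumW hM n]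
  refine iSup_le fun r => le_trans (lift_step hM hS1 r) (sup_le ?_ ?_)
  · exact le_iSup₂ (f := fun i (_ : i.1 + i.2 ≤ n) => deligneI σ W F i.1 i.2)
      (r, n - r) (by omega)
  · rw [hS1]
    exact iSup₂_le fun i hi =>
      le_iSup₂ (f := fun i (_ : i.1 + i.2 ≤ n) => deligneI σ W F i.1 i.2) i (by omega)

lemma S2_step (hM : IsMixedHodgeStructure σ W F) {n : ℤ}
    (hS1 : S1 σ W F (n - 1)) (hS2 : S2 σ W F (n - 1)) :
    S2 σ W F n := by
  classical
  intro p
  refine le_antisymm ?_ (iSup₂_le fun i hi => le_inf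
    (le_trans (I_le_F hM i.1 i.2) (hM.f_anti p i.1 hi.1))
    (le_trans (I_le_W hM i.1 i.2) (hM.w_mono hi.2)))
  intro v hv
  have hvpf : v ∈ ⨆ r, ⨆ _ : p ≤ r, ph σ W F n r := by
    rw [← pure_sumF hM n p]
    exact Submodule.mem_sup_left hv
  obtain ⟨s, xx, hx, hxs, hxS, hsum⟩ :=
    rep_of_mem_biSup (fun r : ℤ => ph σ W F n r) {r : ℤ | p ≤ r} hvpf
  set s' : Finset ℤ := s.filter (fun r => p ≤ r) with hs'
  have hsum' : ∑ r ∈ s', xx r = v := by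
    rw [hs']
    have h2 : ∑ r ∈ s.filter (fun r => p ≤ r), xx r = ∑ r ∈ s, xx r :=
      Finset.sum_filter_of_ne (fun r _ h0 => hxS r h0)
    rw [h2, hsum]
  have hdec : ∀ r : ℤ, ∃ y ∈ deligneI σ W F r (n - r), ∃ z ∈ W (n - 1), y + z = xx r :=
    fun r => Submodule.mem_sup.mp ((lift_step hM hS1 r) (hx r))
  choose y hy z hz hyz using hdec
  have hv2 : v = (∑ r ∈ s', y r) + ∑ r ∈ s', z r := by
    rw [← hsum', ← Finset.sum_add_distrib]
    exact (Finset.sum_congr rfl fun r _ => hyz r).symm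
  rw [hv2]
  refine add_mem (Submodule.sum_mem _ fun r hr => ?_) ?_
  · have hpr : p ≤ r := (Finset.mem_filter.mp hr).2
    exact mem_biSup_of ((r, n - r) : ℤ × ℤ) ⟨hpr, by omega⟩ (hy r)
  · have hzw : (∑ r ∈ s', z r) ∈ W (n - 1) := Submodule.sum_mem _ fun r _ => hz r
    have hzf : (∑ r ∈ s', z r) ∈ F p := by
      have he3 : (∑ r ∈ s', z r) = v - ∑ r ∈ s', y r := by rw [hv2]; abel
      rw [he3]
      refine sub_mem (Submodule.mem_inf.mp hv).1 (Submodule.sum_mem _ fun r hr => ?_)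
      have hpr : p ≤ r := (Finset.mem_filter.mp hr).2
      exact hM.f_anti p r hpr ((I_le_F hM r (n - r)) (hy r))
    have hmem := Submodule.mem_inf.mpr ⟨hzf, hzw⟩
    rw [hS2 p] at hmem
    exact (iSup₂_le fun i hi =>
      le_biSup (fun i : ℤ × ℤ => deligneI σ W F i.1 i.2) ⟨hi.1, by omega⟩) hmem

set_option maxHeartbeats 1000000 in
lemma K2_step (hσ : ∀ v, σ (σ v) = v) (hM : IsMixedHodgeStructure σ W F) {p q : ℤ}
    (hS2all : ∀ m, m ≤ p + q - 1 → S2 σ W F m)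
    (hS4 : S4 σ W F (p + q - 1))
    (hrel : Rel σ W F (p + q - 1)) :
    deligneI σ W F p q ⊓ W (p + q - 1) = ⊥ := by
  have hHi : deligneI σ W F p q ⊓ W (p + q - 1) ≤
      ⨆ i : ℤ × ℤ, ⨆ _ : i ∈ {i : ℤ × ℤ | p ≤ i.1 ∧ i.1 + i.2 ≤ p + q - 1},
        deligneI σ W F i.1 i.2 := by
    refine le_trans (inf_le_inf_right _ (I_le_F hM p q)) ?_
    exact le_of_eq (hS2all (p + q - 1) (by omega) p)
  have hsfW : sf σ W F p q ⊓ W (p + q - 1) ≤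
      ⨆ i : ℤ × ℤ, ⨆ _ : i ∈ {i : ℤ × ℤ | i.1 + i.2 ≤ p + q - 1 ∧ i.1 ≤ p - 1},
        deligneI σ W F i.1 i.2 := by
    rw [sf, sup_comm, sup_inf_assoc_of_le _ (J_le_W hM (by omega : p + q - 2 ≤ p + q - 1)),
      inf_assoc, inf_eq_right.mpr (hM.w_mono (by omega : p + q - 1 ≤ p + q))]
    refine sup_le ?_ ?_
    · refine iSup₂_le fun j hj => ?_
      refine le_trans (sigmaFW_le hσ hM (hS2all (p + q - j) (by omega))
        (hS4.mono (by omega)) (q - j + 1)) ?_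
      refine iSup₂_le fun i hi => ?_
      obtain ⟨h1, h2⟩ := hi
      exact le_biSup (fun i : ℤ × ℤ => deligneI σ W F i.1 i.2)
        (show i.1 + i.2 ≤ p + q - 1 ∧ i.1 ≤ p - 1 by omega)
    · refine le_trans (sigmaFW_le hσ hM (hS2all (p + q - 1) (by omega))
        (hS4.mono (by omega)) q) ?_
      refine iSup₂_le fun i hi => ?_
      obtain ⟨h1, h2⟩ := hi
      exact le_biSup (fun i : ℤ × ℤ => deligneI σ W F i.1 i.2)
        (show i.1 + i.2 ≤ p + q - 1 ∧ i.1 ≤ p - 1 by omega)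
  have hLo : deligneI σ W F p q ⊓ W (p + q - 1) ≤
      ⨆ i : ℤ × ℤ, ⨆ _ : i ∈ {i : ℤ × ℤ | i.1 + i.2 ≤ p + q - 1 ∧ i.1 ≤ p - 1},
        deligneI σ W F i.1 i.2 :=
    le_trans (inf_le_inf_right _ (I_le_sf hM p q)) hsfW
  have hmain := le_trans (le_inf hHi hLo)
    (rel_inf hrel _ _ (fun i hi => hi.2) (fun i hi => hi.1))
  refine le_antisymm (le_trans hmain (iSup₂_le fun i hi => ?_)) bot_le
  have h1 : p ≤ i.1 := hi.1.1
  have h2 : i.1 ≤ p - 1 := hi.2.2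
  exact absurd h2 (by omega)

lemma Rel_step (hM : IsMixedHodgeStructure σ W F) {n : ℤ}
    (hrel : Rel σ W F (n - 1))
    (hK2 : ∀ p q : ℤ, p + q = n → deligneI σ W F p q ⊓ W (n - 1) = ⊥) :
    Rel σ W F n := by
  intro s c hc hcs hcw hsum
  have htop : ∀ i : ℤ × ℤ, i.1 + i.2 = n → c i = 0 := by
    intro i hi
    by_cases h0 : c i = 0
    · exact h0
    exfalso
    have hin : i ∈ s := by by_contra hns; exact h0 (hcs i hns)
    have hmem : c i ∈ ph σ W F n i.1 := by
      have h1 := I_le_ph hM i.1 i.2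
      rw [hi] at h1
      exact h1 (hc i)
    have hrest : c i = - ∑ j ∈ s.erase i, c j := by
      refine eq_neg_of_add_eq_zero_left ?_
      rw [Finset.add_sum_erase s c hin]; exact hsum
    have hmem2 : c i ∈ ⨆ r : ℤ, ⨆ _ : r ≠ i.1, ph σ W F n r := by
      rw [hrest]
      refine neg_mem (Submodule.sum_mem _ fun j hj => ?_)
      by_cases hj0 : c j = 0
      · rw [hj0]; exact zero_mem _
      have hjw := hcw j hj0
      rcases eq_or_lt_of_le hjw with he | hl
      · have hji : j ≠ i := Finset.ne_of_mem_erase hj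
        have hj1 : j.1 ≠ i.1 := by
          intro hh
          refine hji (Prod.ext hh ?_)
          omega
        refine mem_biSup_of j.1 hj1 ?_
        have h1 := I_le_ph hM j.1 j.2
        rw [he] at h1
        exact h1 (hc j)
      · refine mem_biSup_of (i.1 + 1) (by omega) ?_
        exact W_le_ph (σ := σ) n (i.1 + 1)
          (hM.w_mono (by omega : j.1 + j.2 ≤ n - 1) ((I_le_W hM j.1 j.2) (hc j)))
    have hW : c i ∈ W (n - 1) :=
      pure_disj hM n i.1 (Submodule.mem_inf.mpr ⟨hmem, hmem2⟩)
    have hbot : c i ∈ deligneI σ W F i.1 i.2 ⊓ W (n - 1) :=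
      Submodule.mem_inf.mpr ⟨hc i, hW⟩
    rw [hK2 i.1 i.2 hi] at hbot
    exact h0 (by simpa using hbot)
  refine hrel s c hc hcs (fun i hi0 => ?_) hsum
  have h3 := hcw i hi0
  rcases eq_or_lt_of_le h3 with he | hl
  · exact absurd (htop i he) hi0
  · omega

lemma map_sf (hσ : ∀ v, σ (σ v) = v) (hM : IsMixedHodgeStructure σ W F) (p q : ℤ) :
    (sf σ W F p q).map σ =
      (F q ⊓ W (p + q)) ⊔ ⨆ j : ℤ, ⨆ _ : 2 ≤ j, F (q - j + 1) ⊓ W (p + q - j) := by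
  rw [sf, Submodule.map_sup]
  congr 1
  · rw [map_inf_sigma hσ, map_map_sigma hσ, hM.w_stable]
  · rw [Submodule.map_iSup]
    refine iSup_congr fun j => ?_
    rw [Submodule.map_iSup]
    exact iSup_congr fun hj => by rw [map_inf_sigma hσ, map_map_sigma hσ, hM.w_stable]

lemma modular_trick (hM : IsMixedHodgeStructure σ W F) {A J : Submodule ℂ H} {a b : ℤ}
    (hab : a ≤ b) (hJ : J ≤ W a) :
    (A ⊓ W b ⊔ J) ⊓ W a = (A ⊓ W a) ⊔ J := by
  rw [sup_comm (A ⊓ W b) J, sup_inf_assoc_of_le _ hJ, inf_assoc,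
    inf_eq_right.mpr (hM.w_mono hab), sup_comm]

set_option maxHeartbeats 1000000 in
lemma sfW_le (hσ : ∀ v, σ (σ v) = v) (hM : IsMixedHodgeStructure σ W F) {p q : ℤ}
    (hS2all : ∀ m, m ≤ p + q - 1 → S2 σ W F m) (hS4 : S4 σ W F (p + q - 1)) :
    sf σ W F p q ⊓ W (p + q - 1) ≤
      ⨆ i : ℤ × ℤ, ⨆ _ : i ∈ {i : ℤ × ℤ | i.1 + i.2 ≤ p + q - 1 ∧ i.1 ≤ p - 1},
        deligneI σ W F i.1 i.2 := by
  rw [sf, modular_trick hM (by omega) (J_le_W hM (by omega : p + q - 2 ≤ p + q - 1))]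
  refine sup_le ?_ ?_
  · refine le_trans (sigmaFW_le hσ hM (hS2all (p + q - 1) (by omega))
      (hS4.mono (by omega)) q) ?_
    refine iSup₂_le fun i hi => ?_
    obtain ⟨h1, h2⟩ := hi
    exact le_biSup (fun i : ℤ × ℤ => deligneI σ W F i.1 i.2)
      (show i.1 + i.2 ≤ p + q - 1 ∧ i.1 ≤ p - 1 by omega)
  · refine iSup₂_le fun j hj => ?_
    refine le_trans (sigmaFW_le hσ hM (hS2all (p + q - j) (by omega))
      (hS4.mono (by omega)) (q - j + 1)) ?_
    refine iSup₂_le fun i hi => ?_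
    obtain ⟨h1, h2⟩ := hi
    exact le_biSup (fun i : ℤ × ℤ => deligneI σ W F i.1 i.2)
      (show i.1 + i.2 ≤ p + q - 1 ∧ i.1 ≤ p - 1 by omega)

set_option maxHeartbeats 1000000 in
lemma S4_step (hσ : ∀ v, σ (σ v) = v) (hM : IsMixedHodgeStructure σ W F) {n : ℤ}
    (hS1 : S1 σ W F (n - 1)) (hS2all : ∀ m, m ≤ n - 1 → S2 σ W F m)
    (hS4 : S4 σ W F (n - 1)) (hrel : Rel σ W F (n - 1)) :
    S4 σ W F n := by
  intro p q hpq
  rcases lt_or_eq_of_le hpq with h | h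
  · exact hS4 p q (by omega)
  subst h
  rintro y ⟨x, hx, rfl⟩
  rw [deligneI_eq] at hx
  obtain ⟨hx1, hx2⟩ := Submodule.mem_inf.mp hx
  obtain ⟨hxF, hxW⟩ := Submodule.mem_inf.mp hx1
  have hxWs : σ x ∈ W (p + q) := hM.w_stable (p + q) ▸ Submodule.mem_map_of_mem hxW
  have hs1 : σ x ∈ (F p).map σ ⊓ W (p + q) :=
    Submodule.mem_inf.mpr ⟨Submodule.mem_map_of_mem hxF, hxWs⟩
  have hs2 : σ x ∈ (F q ⊓ W (p + q)) ⊔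
      ⨆ j : ℤ, ⨆ _ : 2 ≤ j, F (q - j + 1) ⊓ W (p + q - j) := by
    rw [← map_sf hσ hM p q]
    exact Submodule.mem_map_of_mem hx2
  have hJ1W : (⨆ j : ℤ, ⨆ _ : 2 ≤ j, F (q - j + 1) ⊓ W (p + q - j)) ≤ W (p + q - 1) :=
    iSup₂_le fun j hj => inf_le_right.trans (hM.w_mono (by omega))
  have hph : σ x ∈ ph σ W F (p + q) q := by
    refine Submodule.mem_inf.mpr ⟨?_, ?_⟩
    · rcases Submodule.mem_sup.mp hs2 with ⟨u, hu, w, hw, huw⟩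
      rw [← huw]
      exact add_mem (Submodule.mem_sup_left hu) (Submodule.mem_sup_right (hJ1W hw))
    · rw [show p + q - q = p by ring]
      exact Submodule.mem_sup_left hs1
  have hlift := lift_step hM (n := p + q) hS1 q hph
  rw [show p + q - q = p by ring] at hlift
  obtain ⟨y, hy, w, hw, hyw⟩ := Submodule.mem_sup.mp hlift
  have hwd : w = σ x - y := by rw [← hyw]; abel
  -- constraint 1
  have hyF : y ∈ F q ⊓ W (p + q) := by
    have h1 := Submodule.mem_inf.mp (Submodule.mem_inf.mp ((deligneI_eq σ W F q p) ▸ hy)).1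
    exact Submodule.mem_inf.mpr ⟨h1.1, by rw [show p + q = q + p by ring]; exact h1.2⟩
  have hwX1 : w ∈ ⨆ i : ℤ × ℤ,
      ⨆ _ : i ∈ {i : ℤ × ℤ | i.1 + i.2 ≤ p + q - 1 ∧ (q ≤ i.1 ∨ i.2 ≤ p - 1)},
        deligneI σ W F i.1 i.2 := by
    have hmem : w ∈ ((F q ⊓ W (p + q)) ⊔
        ⨆ j : ℤ, ⨆ _ : 2 ≤ j, F (q - j + 1) ⊓ W (p + q - j)) ⊓ W (p + q - 1) :=
      Submodule.mem_inf.mpr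
        ⟨hwd ▸ sub_mem hs2 (Submodule.mem_sup_left hyF), hw⟩
    rw [modular_trick hM (by omega) hJ1W] at hmem
    revert hmem
    refine fun hmem => (sup_le ?_ ?_ :
      (F q ⊓ W (p + q - 1)) ⊔ (⨆ j : ℤ, ⨆ _ : 2 ≤ j, F (q - j + 1) ⊓ W (p + q - j)) ≤ _) hmem
    · rw [hS2all (p + q - 1) (by omega) q]
      refine iSup₂_le fun i hi => ?_
      obtain ⟨h1, h2⟩ := hi
      exact le_biSup (fun i : ℤ × ℤ => deligneI σ W F i.1 i.2)
        (show i.1 + i.2 ≤ p + q - 1 ∧ (q ≤ i.1 ∨ i.2 ≤ p - 1) by omega)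
    · refine iSup₂_le fun j hj => ?_
      rw [hS2all (p + q - j) (by omega) (q - j + 1)]
      refine iSup₂_le fun i hi => ?_
      obtain ⟨h1, h2⟩ := hi
      exact le_biSup (fun i : ℤ × ℤ => deligneI σ W F i.1 i.2)
        (show i.1 + i.2 ≤ p + q - 1 ∧ (q ≤ i.1 ∨ i.2 ≤ p - 1) by omega)
  -- constraint 2
  have hwX2 : w ∈ ⨆ i : ℤ × ℤ,
      ⨆ _ : i ∈ {i : ℤ × ℤ | i.1 + i.2 ≤ q + p - 1 ∧ i.1 ≤ q - 1},
        deligneI σ W F i.1 i.2 := by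
    have hsx : σ x ∈ sf σ W F q p :=
      (term_le_sf hM (Or.inl ⟨le_rfl, by omega⟩)) hs1
    have hmem : w ∈ sf σ W F q p ⊓ W (q + p - 1) := by
      refine Submodule.mem_inf.mpr ⟨hwd ▸ sub_mem hsx ((I_le_sf hM q p) hy), ?_⟩
      rw [show q + p - 1 = p + q - 1 by ring]; exact hw
    exact (sfW_le hσ hM (fun m hm => hS2all m (by omega)) (hS4.mono (by omega))) hmem
  -- combine
  have hcomb := Submodule.mem_inf.mpr ⟨hwX1, hwX2⟩
  have hrelinf := rel_inf hrel
    {i : ℤ × ℤ | i.1 + i.2 ≤ p + q - 1 ∧ (q ≤ i.1 ∨ i.2 ≤ p - 1)}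
    {i : ℤ × ℤ | i.1 + i.2 ≤ q + p - 1 ∧ i.1 ≤ q - 1}
    (fun i hi => hi.1) (fun i hi => by have := hi.1; omega)
  have hwfin : w ∈ ⨆ i : ℤ × ℤ, ⨆ _ : i.1 ≤ q - 1 ∧ i.2 ≤ p - 1,
      deligneI σ W F i.1 i.2 := by
    have hle : (⨆ i : ℤ × ℤ,
        ⨆ _ : i ∈ {i : ℤ × ℤ | i.1 + i.2 ≤ p + q - 1 ∧ (q ≤ i.1 ∨ i.2 ≤ p - 1)} ∩
          {i : ℤ × ℤ | i.1 + i.2 ≤ q + p - 1 ∧ i.1 ≤ q - 1}, deligneI σ W F i.1 i.2) ≤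
        ⨆ i : ℤ × ℤ, ⨆ _ : i.1 ≤ q - 1 ∧ i.2 ≤ p - 1, deligneI σ W F i.1 i.2 := by
      refine iSup₂_le fun i hi => ?_
      obtain ⟨⟨ha1, ha2⟩, hb1, hb2⟩ := hi
      exact le_biSup (fun i : ℤ × ℤ => deligneI σ W F i.1 i.2)
        (show i.1 ≤ q - 1 ∧ i.2 ≤ p - 1 by omega)
    exact hle (hrelinf hcomb)
  exact Submodule.mem_sup.mpr ⟨y, hy, w, hwfin, hyw⟩

lemma Rel.mono {n m : ℤ} (h : Rel σ W F n) (hm : m ≤ n) : Rel σ W F m :=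
  fun s c hc hcs hcw hsum => h s c hc hcs (fun i hi => (hcw i hi).trans hm) hsum

set_option maxHeartbeats 4000000 in
lemma master (hσ : ∀ v, σ (σ v) = v) (hM : IsMixedHodgeStructure σ W F) :
    ∀ n : ℤ, S1 σ W F n ∧ S2 σ W F n ∧ Rel σ W F n ∧ S4 σ W F n := by
  obtain ⟨aW, haW⟩ := hM.w_bot
  have triv : ∀ n : ℤ, n ≤ aW →
      S1 σ W F n ∧ S2 σ W F n ∧ Rel σ W F n ∧ S4 σ W F n := by
    intro n hn
    have hI : ∀ p q : ℤ, p + q ≤ n → deligneI σ W F p q = ⊥ := fun p q hpq =>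
      le_bot_iff.mp ((I_le_W hM p q).trans (le_of_eq (haW (p + q) (by omega))))
    refine ⟨?_, ?_, ?_, ?_⟩
    · unfold S1
      rw [haW n hn]
      refine le_antisymm bot_le (iSup₂_le fun i hi => ?_)
      exact le_of_eq (hI i.1 i.2 hi)
    · intro p
      rw [haW n hn, inf_bot_eq]
      refine le_antisymm bot_le (iSup₂_le fun i hi => ?_)
      exact le_of_eq (hI i.1 i.2 hi.2)
    · intro s c hc hcs hcw hsum i
      by_cases h0 : c i = 0
      · exact h0
      · have h1 := hc i
        rw [hI i.1 i.2 (hcw i h0)] at h1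
        simpa using h1
    · intro p q hpq
      rw [hI p q hpq, Submodule.map_bot]
      exact bot_le
  have step : ∀ n : ℤ,
      (∀ m : ℤ, m ≤ n → S1 σ W F m ∧ S2 σ W F m ∧ Rel σ W F m ∧ S4 σ W F m) →
      ∀ m : ℤ, m ≤ n + 1 → S1 σ W F m ∧ S2 σ W F m ∧ Rel σ W F m ∧ S4 σ W F m := by
    intro n ih m hm
    rcases lt_or_eq_of_le hm with h | h
    · exact ih m (by omega)
    subst h
    obtain ⟨h1, h2, h3, h4⟩ := ih n le_rfl
    have e : n = n + 1 - 1 := by ring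
    have e1 : S1 σ W F (n + 1 - 1) := e ▸ h1
    have e2 : S2 σ W F (n + 1 - 1) := e ▸ h2
    have e3 : Rel σ W F (n + 1 - 1) := e ▸ h3
    have e4 : S4 σ W F (n + 1 - 1) := e ▸ h4
    have hS2all : ∀ m' : ℤ, m' ≤ n + 1 - 1 → S2 σ W F m' :=
      fun m' hm' => (ih m' (by omega)).2.1
    have nS1 : S1 σ W F (n + 1) := S1_step hM e1
    have nS2 : S2 σ W F (n + 1) := S2_step hM e1 e2
    have nK2 : ∀ p q : ℤ, p + q = n + 1 →
        deligneI σ W F p q ⊓ W (n + 1 - 1) = ⊥ := by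
      intro p q hpq
      have hk := K2_step hσ hM (p := p) (q := q)
        (fun m' hm' => (ih m' (by omega)).2.1)
        (h4.mono (by omega)) (h3.mono (by omega))
      rwa [show p + q - 1 = n + 1 - 1 by omega] at hk
    have nRel : Rel σ W F (n + 1) := Rel_step hM e3 nK2
    have nS4 : S4 σ W F (n + 1) := S4_step hσ hM e1 hS2all e4 e3
    exact ⟨nS1, nS2, nRel, nS4⟩
  have key : ∀ n : ℤ, aW ≤ n → ∀ m : ℤ, m ≤ n →
      S1 σ W F m ∧ S2 σ W F m ∧ Rel σ W F m ∧ S4 σ W F m :=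
    Int.le_induction (fun m hm => triv m hm) (fun n' _ ih => step n' ih)
  intro n
  rcases le_total n aW with h | h
  · exact triv n h
  · exact key n h n le_rfl

set_option maxHeartbeats 1000000 in
lemma master_indep (hσ : ∀ v, σ (σ v) = v) (hM : IsMixedHodgeStructure σ W F) :
    iSupIndep (fun i : ℤ × ℤ => deligneI σ W F i.1 i.2) := by
  classical
  intro i0
  rw [Submodule.disjoint_def]
  intro x hx0 hxs
  obtain ⟨s, c, hc, hcs, hcS, hsum⟩ :=
    rep_of_mem_biSup (fun i : ℤ × ℤ => deligneI σ W F i.1 i.2) {j | j ≠ i0} hxs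
  have hci0 : c i0 = 0 := by
    by_contra h0
    exact (hcS i0 h0) rfl
  set c' : ℤ × ℤ → H := fun j => if j = i0 then -x else c j with hc'
  set s' : Finset (ℤ × ℤ) := insert i0 (s.erase i0) with hs'
  have hne : s'.Nonempty := ⟨i0, Finset.mem_insert_self _ _⟩
  set n : ℤ := s'.sup' hne (fun i => i.1 + i.2) with hn
  have hrel := (master hσ hM n).2.2.1
  have hmem : ∀ i, c' i ∈ deligneI σ W F i.1 i.2 := by
    intro i
    by_cases h : i = i0
    · subst h; simp only [hc', if_pos rfl]; exact neg_mem hx0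
    · simp only [hc', if_neg h]; exact hc i
  have hout : ∀ i ∉ s', c' i = 0 := by
    intro i hi
    have hii0 : i ≠ i0 := by
      intro h; exact hi (h ▸ Finset.mem_insert_self _ _)
    simp only [hc', if_neg hii0]
    refine hcs i fun hins => ?_
    exact hi (Finset.mem_insert_of_mem (Finset.mem_erase.mpr ⟨hii0, hins⟩))
  have hw : ∀ i, c' i ≠ 0 → i.1 + i.2 ≤ n := by
    intro i hi0
    have his : i ∈ s' := by
      by_contra hns
      exact hi0 (hout i hns)
    exact Finset.le_sup' (fun i : ℤ × ℤ => i.1 + i.2) his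
  have hsum' : ∑ i ∈ s', c' i = 0 := by
    rw [hs', Finset.sum_insert (Finset.notMem_erase i0 s)]
    have hcc : ∑ i ∈ s.erase i0, c' i = ∑ i ∈ s.erase i0, c i :=
      Finset.sum_congr rfl fun i hi => by
        simp only [hc', if_neg (Finset.ne_of_mem_erase hi)]
    rw [hcc, Finset.sum_erase s hci0, hsum]
    simp only [hc', if_pos rfl]
    abel
  have hz := hrel s' c' hmem hout hw hsum' i0
  rw [hc'] at hz
  simp only [if_pos rfl] at hz
  exact neg_eq_zero.mp hz

end DeligneAux

set_option maxHeartbeats 2000000 in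
/-- **Definition-Proposition 2.7 (Deligne splitting).** For a mixed Hodge structure
`(W, F)` on `(H, σ)` one has the internal direct sum decompositions
`W_k = ⊕_{p+q ≤ k} I^{p,q}` and `F^p = ⊕_{r ≥ p} I^{r,q}`. -/
theorem deligne_splitting
    (H : Type*) [AddCommGroup H] [Module ℂ H] [FiniteDimensional ℂ H]
    (σ : H →ₛₗ[starRingEnd ℂ] H) (hσinv : ∀ v, σ (σ v) = v)
    (W F : ℤ → Submodule ℂ H)
    (hMHS : IsMixedHodgeStructure σ W F) :
    (∀ k : ℤ,
      (iSupIndep fun x : {x : ℤ × ℤ // x.1 + x.2 ≤ k} =>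
        deligneI σ W F x.1.1 x.1.2) ∧
      (⨆ x : {x : ℤ × ℤ // x.1 + x.2 ≤ k}, deligneI σ W F x.1.1 x.1.2) = W k) ∧
    (∀ p : ℤ,
      (iSupIndep fun x : {x : ℤ × ℤ // p ≤ x.1} =>
        deligneI σ W F x.1.1 x.1.2) ∧
      (⨆ x : {x : ℤ × ℤ // p ≤ x.1}, deligneI σ W F x.1.1 x.1.2) = F p) := by
  classical
  obtain ⟨bW, hbW⟩ := hMHS.w_top
  have hmaster := DeligneAux.master hσinv hMHS
  have hindep := DeligneAux.master_indep hσinv hMHS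
  constructor
  · intro k
    constructor
    · exact hindep.comp (Subtype.val_injective :
        Function.Injective (Subtype.val : {x : ℤ × ℤ // x.1 + x.2 ≤ k} → ℤ × ℤ))
    · refine le_antisymm
        (iSup_le fun x => (DeligneAux.I_le_W hMHS x.1.1 x.1.2).trans (hMHS.w_mono x.2)) ?_
      refine le_of_eq_of_le (hmaster k).1 (iSup₂_le fun i hi => ?_)
      exact le_iSup_of_le (⟨i, hi⟩ : {x : ℤ × ℤ // x.1 + x.2 ≤ k}) le_rfl
  · intro p
    constructor
    · exact hindep.comp (Subtype.val_injective :
        Function.Injective (Subtype.val : {x : ℤ × ℤ // p ≤ x.1} → ℤ × ℤ))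
    · refine le_antisymm
        (iSup_le fun x =>
          (DeligneAux.I_le_F hMHS x.1.1 x.1.2).trans (hMHS.f_anti p x.1.1 x.2)) ?_
      have hFp : F p ≤ F p ⊓ W bW :=
        le_inf le_rfl (by rw [hbW bW le_rfl]; exact le_top)
      refine le_trans hFp ?_
      refine le_of_eq_of_le ((hmaster bW).2.1 p) (iSup₂_le fun i hi => ?_)
      exact le_iSup_of_le (⟨i, hi.1⟩ : {x : ℤ × ℤ // p ≤ x.1}) le_rfl
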